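/- Let f : ℝ^d → ℝ be three times continuously differentiable on an open set containing the point x, and fix a coordinate i ∈ {1,…,d}. Define A_i(h) = 2^{−d} Σ_{Δ ∈ {−1,1}^d} (f(x+hΔ) − f(x−hΔ))/(2h Δ_i), the uniform average over all sign vectors of the simultaneous-perturbation difference quotient in direction i. Then lim_{h→0⁺} (A_i(h) − ∂_i f(x))/h² = (1/6)(∂³_{iii} f(x) + 3 Σ_{k≠i} ∂³_{ikk} f(x)). In particular the bias A_i(h) − ∂_i f(x) is O(h²) as h → 0⁺. -/

import Mathlib

open Finset Filter Asymptotics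

/-- The sign vector in `ℝ^d` associated with a Boolean vector: `1` where `true`, `-1` where
`false`. Ranging over all `s : Fin d → Bool` ranges over all sign vectors `Δ ∈ {-1,1}^d`. -/
noncomputable def signVec (d : ℕ) (s : Fin d → Bool) : EuclideanSpace ℝ (Fin d) :=
  WithLp.toLp 2 (fun k => if s k then (1 : ℝ) else -1)

namespace SPSA


variable {d : ℕ}

lemma sum_sign_pow (m : Fin d → ℕ) :
    ∑ s : Fin d → Bool, ∏ j, (signVec d s j) ^ (m j)
      = ∏ j : Fin d, (if Even (m j) then (2:ℝ) else 0) := by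
  have : ∀ s : Fin d → Bool, ∏ j, (signVec d s j) ^ (m j)
      = ∏ j, (fun j (b : Bool) => ((if b then (1:ℝ) else -1)) ^ (m j)) j (s j) := by
    intro s; rfl
  rw [Finset.sum_congr rfl fun s _ => this s,
    ← Fintype.prod_sum (fun j (b : Bool) => ((if b then (1:ℝ) else -1)) ^ (m j))]
  refine Finset.prod_congr rfl fun j _ => ?_
  rw [Fintype.sum_bool]
  by_cases h : Even (m j)
  · simp [h, h.neg_one_pow]; norm_num
  · simp [h, (Nat.not_even_iff_odd.1 h).neg_one_pow]

lemma sign_eq_prod (s : Fin d → Bool) (a : Fin d) :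
    signVec d s a = ∏ j, (signVec d s j) ^ (if a = j then 1 else 0) := by
  simp only [pow_ite, pow_one, pow_zero]
  rw [Finset.prod_ite_eq]
  simp


lemma sum_sign_two (a b : Fin d) :
    ∑ s : Fin d → Bool, signVec d s a * signVec d s b
      = if a = b then (2:ℝ)^d else 0 := by
  have key : ∀ s : Fin d → Bool, signVec d s a * signVec d s b
      = ∏ j, (signVec d s j) ^ ((if a = j then 1 else 0) + (if b = j then 1 else 0)) := by
    intro s
    simp only [pow_add]
    rw [Finset.prod_mul_distrib, ← sign_eq_prod s a, ← sign_eq_prod s b]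
  rw [Finset.sum_congr rfl fun s _ => key s, sum_sign_pow]
  by_cases h : a = b
  · rw [if_pos h]
    subst h
    have : ∀ j : Fin d, Even ((if a = j then 1 else 0) + (if a = j then 1 else 0)) := by
      intro j; by_cases h1 : a = j <;> simp [h1]
    simp only [this, if_true]
    simp [Finset.prod_const]
  · rw [if_neg h]
    apply Finset.prod_eq_zero (Finset.mem_univ a)
    have h' : b ≠ a := fun hh => h hh.symm
    norm_num [h']

lemma sum_sign_four (i a b c : Fin d) :
    ∑ s : Fin d → Bool, signVec d s i * signVec d s a * signVec d s b * signVec d s c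
      = if (a = i ∧ b = c) ∨ (b = i ∧ a = c) ∨ (c = i ∧ a = b) then (2:ℝ)^d else 0 := by
  have key : ∀ s : Fin d → Bool, signVec d s i * signVec d s a * signVec d s b * signVec d s c
      = ∏ j, (signVec d s j) ^ ((if i = j then 1 else 0) + (if a = j then 1 else 0)
          + (if b = j then 1 else 0) + (if c = j then 1 else 0)) := by
    intro s
    simp only [pow_add]
    rw [Finset.prod_mul_distrib, Finset.prod_mul_distrib, Finset.prod_mul_distrib,
      ← sign_eq_prod s i, ← sign_eq_prod s a, ← sign_eq_prod s b, ← sign_eq_prod s c]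
  rw [Finset.sum_congr rfl fun s _ => key s, sum_sign_pow]
  by_cases h : (a = i ∧ b = c) ∨ (b = i ∧ a = c) ∨ (c = i ∧ a = b)
  · rw [if_pos h]
    have heven : ∀ j : Fin d, Even ((if i = j then 1 else 0) + (if a = j then 1 else 0)
          + (if b = j then 1 else 0) + (if c = j then 1 else 0)) := by
      rcases h with ⟨rfl, rfl⟩ | ⟨rfl, rfl⟩ | ⟨rfl, rfl⟩ <;> intro j <;> split_ifs <;> decide
    simp only [heven, if_true]
    simp [Finset.prod_const]
  · rw [if_neg h]
    push_neg at h
    obtain ⟨h1, h2, h3⟩ := h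
    -- find a coordinate with odd exponent
    have hodd : ∃ j : Fin d, ¬ Even ((if i = j then 1 else 0) + (if a = j then 1 else 0)
          + (if b = j then 1 else 0) + (if c = j then 1 else 0)) := by
      by_cases ha : a = i
      · have hbc := h1 ha
        by_cases hb : b = i
        · refine ⟨c, fun hcon => ?_⟩
          have hic : i ≠ c := hb ▸ hbc
          have hac : a ≠ c := ha ▸ hic
          norm_num [hic, hac, hbc] at hcon
        · refine ⟨b, ?_⟩
          have h1b : i ≠ b := fun hh => hb hh.symm
          have h2b : a ≠ b := by rw [ha]; exact h1b
          have h3b : c ≠ b := fun hh => hbc hh.symm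
          intro hcon
          norm_num [h1b, h2b, h3b] at hcon
      · by_cases hb : b = i
        · have hac := h2 hb
          refine ⟨a, ?_⟩
          have h1a : i ≠ a := fun hh => ha hh.symm
          have h2a : b ≠ a := by rw [hb]; exact h1a
          have h3a : c ≠ a := fun hh => hac hh.symm
          intro hcon
          norm_num [h1a, h2a, h3a] at hcon
        · by_cases hc : c = i
          · have hab := h3 hc
            refine ⟨a, ?_⟩
            have h1a : i ≠ a := fun hh => ha hh.symm
            have h2a : b ≠ a := fun hh => hab hh.symm
            have h3a : c ≠ a := by rw [hc]; exact h1a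
            intro hcon
            norm_num [h1a, h2a, h3a] at hcon
          · refine ⟨i, ?_⟩
            have h2a : a ≠ i := ha
            have h3a : b ≠ i := hb
            have h4a : c ≠ i := hc
            intro hcon
            norm_num [h2a, h3a, h4a] at hcon
    obtain ⟨j, hj⟩ := hodd
    apply Finset.prod_eq_zero (Finset.mem_univ j)
    simp [hj]



variable {d : ℕ}

lemma euclid_decomp (v : EuclideanSpace ℝ (Fin d)) :
    v = ∑ k, v k • EuclideanSpace.single k (1:ℝ) := by
  have h := (EuclideanSpace.basisFun (Fin d) ℝ).sum_repr v
  simp only [EuclideanSpace.basisFun_repr, EuclideanSpace.basisFun_apply] at h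
  exact h.symm

lemma sum_eps_smul (i : Fin d) (hst : ∀ a b : Fin d, ∑ s : Fin d → Bool,
      signVec d s a * signVec d s b = if a = b then (2:ℝ)^d else 0) :
    ∑ s : Fin d → Bool, (signVec d s i : ℝ) • signVec d s
      = (2^d : ℝ) • (EuclideanSpace.single i 1 : EuclideanSpace ℝ (Fin d)) := by
  ext k
  have happ : (∑ s : Fin d → Bool, (signVec d s i : ℝ) • signVec d s) k
      = ∑ s : Fin d → Bool, signVec d s i * signVec d s k := by
    rw [WithLp.ofLp_sum, Finset.sum_apply]; rfl
  rw [happ, hst i k]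
  simp only [PiLp.smul_apply, smul_eq_mul, EuclideanSpace.single_apply]
  by_cases h : i = k <;> simp [h, eq_comm]


lemma linear_sum_id (L : EuclideanSpace ℝ (Fin d) →L[ℝ] ℝ) (i : Fin d)
    (hst : ∀ a b : Fin d, ∑ s : Fin d → Bool,
      signVec d s a * signVec d s b = if a = b then (2:ℝ)^d else 0) :
    ∑ s : Fin d → Bool, (signVec d s i : ℝ) * L (signVec d s)
      = (2^d : ℝ) * L (EuclideanSpace.single i 1) := by
  have h1 : ∀ s : Fin d → Bool, (signVec d s i : ℝ) * L (signVec d s)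
      = L ((signVec d s i : ℝ) • signVec d s) := by
    intro s; rw [map_smul]; rfl
  rw [Finset.sum_congr rfl fun s _ => h1 s, ← map_sum, sum_eps_smul i hst, map_smul]
  rfl

section cubic

variable (M : EuclideanSpace ℝ (Fin d) →L[ℝ] EuclideanSpace ℝ (Fin d) →L[ℝ]
    EuclideanSpace ℝ (Fin d) →L[ℝ] ℝ)

lemma cubic_expand (v : EuclideanSpace ℝ (Fin d)) :
    M v v v = ∑ k1, ∑ k2, ∑ k3, v k1 * v k2 * v k3 *
      M (EuclideanSpace.single k1 1) (EuclideanSpace.single k2 1) (EuclideanSpace.single k3 1) := by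
  have exp1 : ∀ y z : EuclideanSpace ℝ (Fin d), M v y z
      = ∑ k, v k * M (EuclideanSpace.single k 1) y z := by
    intro y z
    conv_lhs => rw [euclid_decomp v]
    rw [map_sum, ContinuousLinearMap.sum_apply, ContinuousLinearMap.sum_apply]
    refine Finset.sum_congr rfl fun k _ => ?_
    rw [map_smul, ContinuousLinearMap.smul_apply, ContinuousLinearMap.smul_apply, smul_eq_mul]
  have exp2 : ∀ (u : EuclideanSpace ℝ (Fin d)) (z : EuclideanSpace ℝ (Fin d)), M u v z
      = ∑ k, v k * M u (EuclideanSpace.single k 1) z := by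
    intro u z
    conv_lhs => rw [euclid_decomp v]
    rw [map_sum, ContinuousLinearMap.sum_apply]
    refine Finset.sum_congr rfl fun k _ => ?_
    rw [map_smul, ContinuousLinearMap.smul_apply, smul_eq_mul]
  have exp3 : ∀ (u y : EuclideanSpace ℝ (Fin d)), M u y v
      = ∑ k, v k * M u y (EuclideanSpace.single k 1) := by
    intro u y
    conv_lhs => rw [euclid_decomp v]
    rw [map_sum]
    refine Finset.sum_congr rfl fun k _ => ?_
    rw [map_smul, smul_eq_mul]
  rw [exp1 v v]
  refine Finset.sum_congr rfl fun k1 _ => ?_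
  rw [exp2, Finset.mul_sum]
  refine Finset.sum_congr rfl fun k2 _ => ?_
  rw [exp3, Finset.mul_sum, Finset.mul_sum]
  refine Finset.sum_congr rfl fun k3 _ => ?_
  ring

lemma indicator_split {α : Type*} [DecidableEq α] (i k1 k2 k3 : α) (X c : ℝ) :
    (if (k1 = i ∧ k2 = k3) ∨ (k2 = i ∧ k1 = k3) ∨ (k3 = i ∧ k1 = k2) then c else 0) * X
      = c * (((if k1 = i then (if k2 = k3 then X else 0) else 0)
          + (if k2 = i then (if k1 = k3 then X else 0) else 0)
          + (if k3 = i then (if k1 = k2 then X else 0) else 0))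
          - 2 * (if k1 = i then (if k2 = i then (if k3 = i then X else 0) else 0) else 0)) := by
  by_cases h1 : k1 = i <;> by_cases h2 : k2 = i <;> by_cases h3 : k3 = i <;>
    by_cases h4 : k2 = k3 <;> by_cases h5 : k1 = k3 <;> by_cases h6 : k1 = k2 <;>
    simp_all <;> (try ring) <;> tauto

lemma cubic_sum (i : Fin d)
    (hsym1 : ∀ a b c, M a b c = M b a c) (hsym2 : ∀ a b c, M a b c = M a c b)
    (hquad : ∀ a b c : Fin d, ∑ s : Fin d → Bool,
      signVec d s i * signVec d s a * signVec d s b * signVec d s c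
      = if (a = i ∧ b = c) ∨ (b = i ∧ a = c) ∨ (c = i ∧ a = b) then (2:ℝ)^d else 0) :
    ∑ s : Fin d → Bool, (signVec d s i : ℝ) * M (signVec d s) (signVec d s) (signVec d s)
      = (2^d : ℝ) * (M (EuclideanSpace.single i 1) (EuclideanSpace.single i 1)
            (EuclideanSpace.single i 1)
          + 3 * ∑ k ∈ Finset.univ.erase i, M (EuclideanSpace.single i 1)
              (EuclideanSpace.single k 1) (EuclideanSpace.single k 1)) := by
  set g : Fin d → Fin d → Fin d → ℝ := fun a b c =>
    M (EuclideanSpace.single a 1) (EuclideanSpace.single b 1) (EuclideanSpace.single c 1) with hg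
  have step1 : ∑ s : Fin d → Bool, (signVec d s i : ℝ) * M (signVec d s) (signVec d s) (signVec d s)
      = ∑ k1, ∑ k2, ∑ k3, (∑ s : Fin d → Bool,
          signVec d s i * signVec d s k1 * signVec d s k2 * signVec d s k3) * g k1 k2 k3 := by
    have hpt : ∀ s : Fin d → Bool, (signVec d s i : ℝ) * M (signVec d s) (signVec d s) (signVec d s)
        = ∑ k1, ∑ k2, ∑ k3, signVec d s i * signVec d s k1 * signVec d s k2 * signVec d s k3
            * g k1 k2 k3 := by
      intro s
      rw [cubic_expand M (signVec d s), Finset.mul_sum]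
      refine Finset.sum_congr rfl fun k1 _ => ?_
      rw [Finset.mul_sum]
      refine Finset.sum_congr rfl fun k2 _ => ?_
      rw [Finset.mul_sum]
      refine Finset.sum_congr rfl fun k3 _ => ?_
      rw [hg]; ring
    rw [Finset.sum_congr rfl fun s _ => hpt s]
    rw [Finset.sum_comm]
    refine Finset.sum_congr rfl fun k1 _ => ?_
    rw [Finset.sum_comm]
    refine Finset.sum_congr rfl fun k2 _ => ?_
    rw [Finset.sum_comm]
    refine Finset.sum_congr rfl fun k3 _ => ?_
    rw [← Finset.sum_mul]
  rw [step1]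
  have step2 : ∀ k1 k2 k3 : Fin d, (∑ s : Fin d → Bool,
        signVec d s i * signVec d s k1 * signVec d s k2 * signVec d s k3) * g k1 k2 k3
      = (2:ℝ)^d * (((if k1 = i then (if k2 = k3 then g k1 k2 k3 else 0) else 0)
          + (if k2 = i then (if k1 = k3 then g k1 k2 k3 else 0) else 0)
          + (if k3 = i then (if k1 = k2 then g k1 k2 k3 else 0) else 0))
          - 2 * (if k1 = i then (if k2 = i then (if k3 = i then g k1 k2 k3 else 0) else 0) else 0)) := by
    intro k1 k2 k3
    rw [hquad k1 k2 k3, indicator_split]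
  rw [Finset.sum_congr rfl fun k1 _ => Finset.sum_congr rfl fun k2 _ =>
    Finset.sum_congr rfl fun k3 _ => step2 k1 k2 k3]
  simp only [← Finset.mul_sum, Finset.sum_sub_distrib, Finset.sum_add_distrib]
  have S1 : ∑ k1, ∑ k2, ∑ k3, (if k1 = i then (if k2 = k3 then g k1 k2 k3 else 0) else 0)
      = ∑ k, g i k k := by
    have inner : ∀ k1, (∑ k2, ∑ k3, (if k1 = i then (if k2 = k3 then g k1 k2 k3 else 0) else 0))
        = if k1 = i then ∑ k2, g k1 k2 k2 else 0 := by
      intro k1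
      by_cases h : k1 = i
      · simp only [h, if_true]
        exact Finset.sum_congr rfl fun k2 _ => by simp [Finset.sum_ite_eq]
      · simp [h]
    rw [Finset.sum_congr rfl fun k1 _ => inner k1]
    simp [Finset.sum_ite_eq']
  have S2 : ∑ k1, ∑ k2, ∑ k3, (if k2 = i then (if k1 = k3 then g k1 k2 k3 else 0) else 0)
      = ∑ k, g k i k := by
    have inner : ∀ k1 k2, (∑ k3, (if k2 = i then (if k1 = k3 then g k1 k2 k3 else 0) else 0))
        = if k2 = i then g k1 k2 k1 else 0 := by
      intro k1 k2
      by_cases h : k2 = i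
      · simp [h, Finset.sum_ite_eq]
      · simp [h]
    rw [Finset.sum_congr rfl fun k1 _ => Finset.sum_congr rfl fun k2 _ => inner k1 k2]
    exact Finset.sum_congr rfl fun k1 _ => by simp [Finset.sum_ite_eq']
  have S3 : ∑ k1, ∑ k2, ∑ k3, (if k3 = i then (if k1 = k2 then g k1 k2 k3 else 0) else 0)
      = ∑ k, g k k i := by
    have inner : ∀ k1 k2, (∑ k3, (if k3 = i then (if k1 = k2 then g k1 k2 k3 else 0) else 0))
        = if k1 = k2 then g k1 k2 i else 0 := by
      intro k1 k2
      by_cases h : k1 = k2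
      · simp [h, Finset.sum_ite_eq']
      · simp [h]
    rw [Finset.sum_congr rfl fun k1 _ => Finset.sum_congr rfl fun k2 _ => inner k1 k2]
    exact Finset.sum_congr rfl fun k1 _ => by simp [Finset.sum_ite_eq]
  have S4 : ∑ k1, ∑ k2, ∑ k3, (if k1 = i then (if k2 = i then (if k3 = i then g k1 k2 k3 else 0) else 0) else 0)
      = g i i i := by
    have inner : ∀ k1 k2, (∑ k3, (if k1 = i then (if k2 = i then (if k3 = i then g k1 k2 k3 else 0) else 0) else 0))
        = if k1 = i then (if k2 = i then g k1 k2 i else 0) else 0 := by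
      intro k1 k2
      by_cases h1 : k1 = i <;> by_cases h2 : k2 = i <;> simp [h1, h2, Finset.sum_ite_eq']
    rw [Finset.sum_congr rfl fun k1 _ => Finset.sum_congr rfl fun k2 _ => inner k1 k2]
    have inner2 : ∀ k1, (∑ k2, (if k1 = i then (if k2 = i then g k1 k2 i else 0) else 0))
        = if k1 = i then g k1 i i else 0 := by
      intro k1
      by_cases h1 : k1 = i <;> simp [h1, Finset.sum_ite_eq']
    rw [Finset.sum_congr rfl fun k1 _ => inner2 k1]
    simp [Finset.sum_ite_eq']
  rw [S1, S2, S3, S4]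
  have hx2 : ∀ k, g k i k = g i k k := fun k => hsym1 _ _ _
  have hx3 : ∀ k, g k k i = g i k k := fun k => (hsym2 _ _ _).trans (hsym1 _ _ _)
  rw [Finset.sum_congr rfl fun k _ => hx2 k, Finset.sum_congr rfl fun k _ => hx3 k]
  have hsplit : ∑ k, g i k k
      = g i i i + ∑ k ∈ Finset.univ.erase i, g i k k :=
    (Finset.add_sum_erase Finset.univ _ (Finset.mem_univ i)).symm
  rw [hsplit]
  ring

end cubic



variable {G : Type*} [NormedAddCommGroup G] [NormedSpace ℝ G]

lemma d3_apply_eq (f : G → ℝ) (z : G) (m : Fin 3 → G) :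
    iteratedFDeriv ℝ 3 f z m = fderiv ℝ (fderiv ℝ (fderiv ℝ f)) z (m 0) (m 1) (m 2) := by
  have h := iteratedFDeriv_succ_apply_right (𝕜 := ℝ) (n := 2) (f := f) (x := z) m
  rw [iteratedFDeriv_two_apply] at h
  exact h.trans rfl

lemma d3_swap01 {f : G → ℝ} (hf : ContDiff ℝ 3 f) (z a b c : G) :
    fderiv ℝ (fderiv ℝ (fderiv ℝ f)) z a b c = fderiv ℝ (fderiv ℝ (fderiv ℝ f)) z b a c := by
  have h2 : ContDiff ℝ 2 (fderiv ℝ f) := hf.fderiv_right (by norm_num)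
  have hsym := (h2.contDiffAt (x := z)).isSymmSndFDerivAt (by norm_num)
  rw [hsym.eq a b]

lemma d3_swap12 {f : G → ℝ} (hf : ContDiff ℝ 3 f) (z a b c : G) :
    fderiv ℝ (fderiv ℝ (fderiv ℝ f)) z a b c = fderiv ℝ (fderiv ℝ (fderiv ℝ f)) z a c b := by
  set H := fderiv ℝ (fderiv ℝ f) with hH
  have hH2 : ContDiff ℝ 1 H := by
    have : ContDiff ℝ 2 (fderiv ℝ f) := hf.fderiv_right (by norm_num)
    exact this.fderiv_right (by norm_num)
  have hHd : DifferentiableAt ℝ H z := (hH2.differentiable (by norm_num)).differentiableAt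
  have key : ∀ u v : G, fderiv ℝ H z a u v = fderiv ℝ (fun y => H y u v) z a := by
    intro u v
    have hd1 : DifferentiableAt ℝ (fun y => H y u) z := hHd.clm_apply (differentiableAt_const u)
    have e1 : fderiv ℝ (fun y => H y u) z = (fderiv ℝ H z).flip u := by
      rw [fderiv_clm_apply hHd (differentiableAt_const u)]
      simp
    have e2 : fderiv ℝ (fun y => H y u v) z = (fderiv ℝ (fun y => H y u) z).flip v := by
      rw [fderiv_clm_apply hd1 (differentiableAt_const v)]
      simp
    rw [e2, e1]
    rfl
  have hsymfun : (fun y => H y b c) = (fun y => H y c b) := by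
    funext y
    exact ((hf.contDiffAt (x := y)).isSymmSndFDerivAt (by norm_num)).eq b c
  rw [key b c, hsymfun, ← key c b]

lemma oneDim {g : ℝ → ℝ} (hg : ContDiff ℝ 3 g) :
    Tendsto (fun h => (g h - g (-h) - 2*h*(deriv g 0)) / h^3) (nhdsWithin 0 (Set.Ioi 0))
      (nhds (deriv (deriv (deriv g)) 0 / 3)) := by
  set g1 := deriv g with hg1def
  set g2 := deriv g1 with hg2def
  set c := deriv g2 0 with hcdef
  have hg' : ContDiff ℝ (2+1) g := by norm_num; exact hg
  have hg1 : ContDiff ℝ 2 g1 := (contDiff_succ_iff_deriv.mp hg').2.2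
  have hg1' : ContDiff ℝ (1+1) g1 := by norm_num; exact hg1
  have hg2 : ContDiff ℝ 1 g2 := (contDiff_succ_iff_deriv.mp hg1').2.2
  have hd0 : ∀ t, HasDerivAt g (g1 t) t := fun t =>
    ((hg.differentiable (by norm_num)) t).hasDerivAt
  have hd1 : ∀ t, HasDerivAt g1 (g2 t) t := fun t =>
    ((hg1.differentiable (by norm_num)) t).hasDerivAt
  have hd2 : HasDerivAt g2 c 0 := ((hg2.differentiable (by norm_num)) 0).hasDerivAt
  set F : ℝ → ℝ := fun h => g h - g (-h) - 2*h*(g1 0) - c/3*h^3 with hFdef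
  set F1 : ℝ → ℝ := fun h => g1 h + g1 (-h) - 2*(g1 0) - c*h^2 with hF1def
  set F2 : ℝ → ℝ := fun h => g2 h - g2 (-h) - 2*c*h with hF2def
  have hF : ∀ h, HasDerivAt F (F1 h) h := by
    intro h
    have h1 : HasDerivAt (fun t => g (-t)) (-(g1 (-h))) h := by
      have := (hd0 (-h)).comp h (hasDerivAt_neg h)
      simp only [mul_neg, mul_one] at this; exact this
    have h2 : HasDerivAt (fun t : ℝ => 2*t*(g1 0)) (2*(g1 0)) h := by
      simpa using ((hasDerivAt_id h).const_mul 2).mul_const (g1 0)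
    have h3 : HasDerivAt (fun t : ℝ => c/3*t^3) (c*h^2) h := by
      have := (hasDerivAt_pow 3 h).const_mul (c/3)
      exact this.congr_deriv (by push_cast; ring)
    have := (((hd0 h).sub h1).sub h2).sub h3
    exact this.congr_deriv (by rw [hF1def]; ring)
  have hF1 : ∀ h, HasDerivAt F1 (F2 h) h := by
    intro h
    have h1 : HasDerivAt (fun t => g1 (-t)) (-(g2 (-h))) h := by
      have := (hd1 (-h)).comp h (hasDerivAt_neg h)
      simp only [mul_neg, mul_one] at this; exact this
    have h3 : HasDerivAt (fun t : ℝ => c*t^2) (2*c*h) h := by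
      have := (hasDerivAt_pow 2 h).const_mul c
      exact this.congr_deriv (by push_cast; ring)
    have := (((hd1 h).add h1).sub (hasDerivAt_const h (2*(g1 0)))).sub h3
    exact this.congr_deriv (by rw [hF2def]; ring)
  -- limit of F2 h / (6 h)
  have hIoi : Set.Ioi (0:ℝ) ⊆ {(0:ℝ)}ᶜ := fun x hx => ne_of_gt hx
  have hIio : Set.Iio (0:ℝ) ⊆ {(0:ℝ)}ᶜ := fun x hx => ne_of_lt hx
  have hslope : Tendsto (fun t => (g2 t - g2 0)/t) (nhdsWithin 0 {(0:ℝ)}ᶜ) (nhds c) := by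
    apply (hasDerivAt_iff_tendsto_slope.mp hd2).congr'
    filter_upwards [self_mem_nhdsWithin] with t ht
    rw [slope_def_field]
    rw [sub_zero]
  have T1 : Tendsto (fun t => (g2 t - g2 0)/t) (nhdsWithin 0 (Set.Ioi 0)) (nhds c) :=
    hslope.mono_left (nhdsWithin_mono 0 hIoi)
  have hneg : Tendsto (fun h : ℝ => -h) (nhdsWithin 0 (Set.Ioi 0)) (nhdsWithin 0 (Set.Iio 0)) := by
    apply tendsto_nhdsWithin_of_tendsto_nhds_of_eventually_within
    · simpa using (continuous_neg.tendsto (0:ℝ)).mono_left nhdsWithin_le_nhds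
    · filter_upwards [self_mem_nhdsWithin] with h hh
      simpa using hh
  have T2 : Tendsto (fun h : ℝ => (g2 (-h) - g2 0)/(-h)) (nhdsWithin 0 (Set.Ioi 0)) (nhds c) :=
    (hslope.mono_left (nhdsWithin_mono 0 hIio)).comp hneg
  have Tlim : Tendsto (fun h : ℝ => ((g2 h - g2 0)/h + (g2 (-h) - g2 0)/(-h) - 2*c)/6)
      (nhdsWithin 0 (Set.Ioi 0)) (nhds 0) := by
    have := (((T1.add T2).sub_const (2*c)).div_const 6)
    convert this using 2
    ring
  have hdiv2 : Tendsto (fun h => F2 h / (6*h)) (nhdsWithin 0 (Set.Ioi 0)) (nhds 0) := by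
    apply Tlim.congr'
    filter_upwards [self_mem_nhdsWithin] with h hh
    have hne : h ≠ 0 := ne_of_gt hh
    rw [hF2def]
    rw [div_neg, ← neg_div, ← add_div]
    field_simp
    ring
  have hdiv1 : Tendsto (fun h => F1 h / (3*h^2)) (nhdsWithin 0 (Set.Ioi 0)) (nhds 0) := by
    apply HasDerivAt.lhopital_zero_nhdsGT (f' := F2) (g' := fun h => 6*h)
    · exact Eventually.of_forall hF1
    · apply Eventually.of_forall
      intro x
      have := (hasDerivAt_pow 2 x).const_mul 3
      exact this.congr_deriv (by push_cast; ring)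
    · filter_upwards [self_mem_nhdsWithin] with h hh
      have : (0:ℝ) < h := hh
      positivity
    · have hg1c : Continuous g1 := hg1.continuous
      have hcont : Continuous F1 := by
        rw [hF1def]
        exact ((hg1c.add (hg1c.comp continuous_neg)).sub continuous_const).sub
          (continuous_const.mul (continuous_pow 2))
      have hF10 : F1 0 = 0 := by simp only [hF1def, neg_zero]; ring
      have := (hcont.tendsto 0).mono_left (nhdsWithin_le_nhds (s := Set.Ioi (0:ℝ)))
      rwa [hF10] at this
    · have hc3 : Continuous (fun x : ℝ => 3 * x ^ 2) := continuous_const.mul (continuous_pow 2)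
      simpa using (hc3.tendsto 0).mono_left
        (nhdsWithin_le_nhds (s := Set.Ioi (0:ℝ)))
    · exact hdiv2
  have hdiv0 : Tendsto (fun h => F h / h^3) (nhdsWithin 0 (Set.Ioi 0)) (nhds 0) := by
    apply HasDerivAt.lhopital_zero_nhdsGT (f' := F1) (g' := fun h => 3*h^2)
    · exact Eventually.of_forall hF
    · apply Eventually.of_forall
      intro x
      have := hasDerivAt_pow 3 x
      exact this.congr_deriv (by push_cast; ring)
    · filter_upwards [self_mem_nhdsWithin] with h hh
      have : (0:ℝ) < h := hh
      positivity
    · have hgc : Continuous g := hg.continuous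
      have hcont : Continuous F := by
        rw [hFdef]
        exact ((hgc.sub (hgc.comp continuous_neg)).sub
          ((continuous_const.mul continuous_id).mul continuous_const)).sub
          (continuous_const.mul (continuous_pow 3))
      have hF0 : F 0 = 0 := by simp only [hFdef, neg_zero]; ring
      have := (hcont.tendsto 0).mono_left (nhdsWithin_le_nhds (s := Set.Ioi (0:ℝ)))
      rwa [hF0] at this
    · simpa using ((continuous_pow 3).tendsto (0:ℝ)).mono_left
        (nhdsWithin_le_nhds (s := Set.Ioi (0:ℝ)))
    · exact hdiv1
  have final := hdiv0.add_const (c/3)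
  rw [zero_add] at final
  apply final.congr'
  filter_upwards [self_mem_nhdsWithin] with h hh
  have hne : h ≠ 0 := ne_of_gt hh
  rw [hFdef]
  field_simp
  ring


variable {d : ℕ}

lemma line_limit {f : G → ℝ} (hf : ContDiff ℝ 3 f) (x v : G) :
    Tendsto (fun h : ℝ => (f (x + h • v) - f (x - h • v) - 2*h*(fderiv ℝ f x v)) / (2*h^3))
      (nhdsWithin 0 (Set.Ioi 0))
      (nhds (fderiv ℝ (fderiv ℝ (fderiv ℝ f)) x v v v / 6)) := by
  set γ : ℝ → G := fun t => x + t • v with hγ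
  have hγd : ∀ t : ℝ, HasDerivAt γ v t := by
    intro t
    have := ((hasDerivAt_id t).smul_const v).const_add x
    rw [one_smul] at this; exact this
  have hγ0 : γ 0 = x := by simp [hγ]
  have hγC : ContDiff ℝ 3 γ := contDiff_const.add (contDiff_id.smul contDiff_const)
  set g : ℝ → ℝ := fun t => f (γ t) with hgdef
  have hgC : ContDiff ℝ 3 g := hf.comp hγC
  have hDf : Differentiable ℝ f := hf.differentiable (by norm_num)
  have hf1 : ContDiff ℝ 2 (fderiv ℝ f) := hf.fderiv_right (by norm_num)
  have hf2 : ContDiff ℝ 1 (fderiv ℝ (fderiv ℝ f)) := hf1.fderiv_right (by norm_num)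
  have hgd : ∀ t, HasDerivAt g (fderiv ℝ f (γ t) v) t := by
    intro t
    exact ((hDf (γ t)).hasFDerivAt).comp_hasDerivAt t (hγd t)
  have h2 : ∀ t, HasDerivAt (fun t => fderiv ℝ f (γ t) v)
      (fderiv ℝ (fderiv ℝ f) (γ t) v v) t := by
    intro t
    have hW : HasFDerivAt (fderiv ℝ f) (fderiv ℝ (fderiv ℝ f) (γ t)) (γ t) :=
      ((hf1.differentiable (by norm_num)) (γ t)).hasFDerivAt
    have hc : HasFDerivAt (fun z => fderiv ℝ f z v)
        ((fderiv ℝ (fderiv ℝ f) (γ t)).flip v) (γ t) := by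
      have := hW.clm_apply (hasFDerivAt_const v (γ t))
      simpa using this
    have := hc.comp_hasDerivAt t (hγd t)
    exact this
  have h3 : ∀ t, HasDerivAt (fun t => fderiv ℝ (fderiv ℝ f) (γ t) v v)
      (fderiv ℝ (fderiv ℝ (fderiv ℝ f)) (γ t) v v v) t := by
    intro t
    have hW : HasFDerivAt (fderiv ℝ (fderiv ℝ f))
        (fderiv ℝ (fderiv ℝ (fderiv ℝ f)) (γ t)) (γ t) :=
      ((hf2.differentiable (by norm_num)) (γ t)).hasFDerivAt
    have hc1 : HasFDerivAt (fun z => fderiv ℝ (fderiv ℝ f) z v)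
        ((fderiv ℝ (fderiv ℝ (fderiv ℝ f)) (γ t)).flip v) (γ t) := by
      have := hW.clm_apply (hasFDerivAt_const v (γ t))
      simpa using this
    have hc2 : HasFDerivAt (fun z => fderiv ℝ (fderiv ℝ f) z v v)
        (((fderiv ℝ (fderiv ℝ (fderiv ℝ f)) (γ t)).flip v).flip v) (γ t) := by
      have := hc1.clm_apply (hasFDerivAt_const v (γ t))
      simpa using this
    have := hc2.comp_hasDerivAt t (hγd t)
    exact this
  have e1 : deriv g = fun t => fderiv ℝ f (γ t) v := funext fun t => (hgd t).deriv
  have e2 : deriv (deriv g) = fun t => fderiv ℝ (fderiv ℝ f) (γ t) v v := by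
    rw [e1]
    exact funext fun t => (h2 t).deriv
  have e3 : deriv (deriv (deriv g)) 0 = fderiv ℝ (fderiv ℝ (fderiv ℝ f)) x v v v := by
    rw [e2]
    rw [(h3 0).deriv, hγ0]
  have e0 : deriv g 0 = fderiv ℝ f x v := by rw [e1]; simp [hγ0]
  have main := (oneDim hgC).const_mul (1/2 : ℝ)
  rw [e3] at main
  have hval : (1/2 : ℝ) * (fderiv ℝ (fderiv ℝ (fderiv ℝ f)) x v v v / 3)
      = fderiv ℝ (fderiv ℝ (fderiv ℝ f)) x v v v / 6 := by ring
  rw [hval] at main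
  apply main.congr
  intro h
  have hg1 : g h = f (x + h • v) := rfl
  have hg2 : g (-h) = f (x - h • v) := by
    rw [hgdef]
    simp only [hγ, neg_smul]
    rw [sub_eq_add_neg]
  rw [hg1, hg2, e0] at *
  rw [mul_comm ((1:ℝ)/2), mul_one_div, div_div]
  ring_nf


lemma core (f : EuclideanSpace ℝ (Fin d) → ℝ) (x : EuclideanSpace ℝ (Fin d))
    (hf : ContDiff ℝ 3 f) (i : Fin d) :
    Tendsto (fun h : ℝ => ((2 ^ d : ℝ)⁻¹ * (∑ s : Fin d → Bool,
        (f (x + h • signVec d s) - f (x - h • signVec d s)) / (2 * h * signVec d s i))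
        - fderiv ℝ f x (EuclideanSpace.single i 1)) / h ^ 2)
      (nhdsWithin 0 (Set.Ioi 0))
      (nhds ((1 / 6) *
          (iteratedFDeriv ℝ 3 f x
              ![EuclideanSpace.single i 1, EuclideanSpace.single i 1, EuclideanSpace.single i 1]
            + 3 * ∑ k ∈ Finset.univ.erase i,
                iteratedFDeriv ℝ 3 f x
                  ![EuclideanSpace.single i 1, EuclideanSpace.single k 1,
                    EuclideanSpace.single k 1]))) := by
  have hpow : ((2:ℝ)^d) ≠ 0 := by positivity
  set M := fderiv ℝ (fderiv ℝ (fderiv ℝ f)) x with hM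
  -- the limit via sum of line limits
  have hsum : Tendsto (fun h : ℝ => (2 ^ d : ℝ)⁻¹ * ∑ s : Fin d → Bool, (signVec d s i : ℝ) *
      ((f (x + h • signVec d s) - f (x - h • signVec d s)
        - 2*h*(fderiv ℝ f x (signVec d s))) / (2*h^3)))
      (nhdsWithin 0 (Set.Ioi 0))
      (nhds ((2 ^ d : ℝ)⁻¹ * ∑ s : Fin d → Bool, (signVec d s i : ℝ) *
        (M (signVec d s) (signVec d s) (signVec d s) / 6))) := by
    apply Tendsto.const_mul
    apply tendsto_finset_sum
    intro s _
    exact (line_limit hf x (signVec d s)).const_mul _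
  -- identify the limit value
  have hlim : (2 ^ d : ℝ)⁻¹ * ∑ s : Fin d → Bool, (signVec d s i : ℝ) *
        (M (signVec d s) (signVec d s) (signVec d s) / 6)
      = (1 / 6) * (iteratedFDeriv ℝ 3 f x
              ![EuclideanSpace.single i 1, EuclideanSpace.single i 1, EuclideanSpace.single i 1]
            + 3 * ∑ k ∈ Finset.univ.erase i,
                iteratedFDeriv ℝ 3 f x
                  ![EuclideanSpace.single i 1, EuclideanSpace.single k 1,
                    EuclideanSpace.single k 1]) := by
    have hrw : ∀ s : Fin d → Bool, (signVec d s i : ℝ) *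
        (M (signVec d s) (signVec d s) (signVec d s) / 6)
        = (1/6) * ((signVec d s i : ℝ) * M (signVec d s) (signVec d s) (signVec d s)) := by
      intro s; ring
    rw [Finset.sum_congr rfl fun s _ => hrw s, ← Finset.mul_sum,
      cubic_sum M i (fun a b c => d3_swap01 hf x a b c) (fun a b c => d3_swap12 hf x a b c)
        (fun a b c => sum_sign_four i a b c)]
    have hit1 : iteratedFDeriv ℝ 3 f x
        ![EuclideanSpace.single i 1, EuclideanSpace.single i 1, EuclideanSpace.single i 1]
        = M (EuclideanSpace.single i 1) (EuclideanSpace.single i 1) (EuclideanSpace.single i 1) := by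
      rw [d3_apply_eq]; rfl
    have hit2 : ∀ k : Fin d, iteratedFDeriv ℝ 3 f x
        ![EuclideanSpace.single i 1, EuclideanSpace.single k 1, EuclideanSpace.single k 1]
        = M (EuclideanSpace.single i 1) (EuclideanSpace.single k 1) (EuclideanSpace.single k 1) := by
      intro k; rw [d3_apply_eq]; rfl
    rw [hit1, Finset.sum_congr rfl fun k _ => hit2 k]
    field_simp
  rw [hlim] at hsum
  apply hsum.congr'
  -- eventual equality of the two expressions
  have hder : fderiv ℝ f x (EuclideanSpace.single i 1)
      = (2^d : ℝ)⁻¹ * ∑ s : Fin d → Bool, (signVec d s i : ℝ) * fderiv ℝ f x (signVec d s) := by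
    rw [linear_sum_id (fderiv ℝ f x) i sum_sign_two, ← mul_assoc, inv_mul_cancel₀ hpow, one_mul]
  filter_upwards [self_mem_nhdsWithin] with h hh
  have hne : h ≠ 0 := ne_of_gt hh
  rw [hder, ← mul_sub, ← Finset.sum_sub_distrib, mul_div_assoc, Finset.sum_div]
  congr 1
  refine Finset.sum_congr rfl fun s _ => ?_
  by_cases hsi : s i
  · have hsv : (signVec d s i : ℝ) = 1 := by simp [signVec, hsi]
    rw [hsv]
    field_simp
    try ring
    try tauto
  · have hsv : (signVec d s i : ℝ) = -1 := by simp [signVec, hsi]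
    rw [hsv]
    field_simp
    try ring
    try tauto


end SPSA

/-- Bias of the simultaneous perturbation estimator (Theorem 1, bias part).
Let `A i h` be the average over all sign vectors `Δ ∈ {-1,1}^d` of
`(f(x + hΔ) - f(x - hΔ))/(2h Δᵢ)`. If `f` is three times continuously differentiable on an
open set containing `x`, then `(A i h - ∂ᵢ f(x))/h² → (1/6)(∂³ᵢᵢᵢ f(x) + 3 ∑_{k≠i} ∂³ᵢₖₖ f(x))`
as `h → 0⁺`; in particular the bias `A i h - ∂ᵢ f(x)` is `O(h²)` as `h → 0⁺`. -/
theorem simultaneous_perturbation_bias (d : ℕ) (f : EuclideanSpace ℝ (Fin d) → ℝ)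
    (x : EuclideanSpace ℝ (Fin d)) (U : Set (EuclideanSpace ℝ (Fin d)))
    (hU : IsOpen U) (hxU : x ∈ U) (hf : ContDiffOn ℝ 3 f U) (i : Fin d)
    (A : ℝ → ℝ)
    (hA : ∀ h : ℝ, A h = (2 ^ d : ℝ)⁻¹ * ∑ s : Fin d → Bool,
        (f (x + h • signVec d s) - f (x - h • signVec d s)) / (2 * h * signVec d s i)) :
    Tendsto (fun h : ℝ => (A h - fderiv ℝ f x (EuclideanSpace.single i 1)) / h ^ 2)
        (nhdsWithin (0 : ℝ) (Set.Ioi 0))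
        (nhds ((1 / 6) *
          (iteratedFDeriv ℝ 3 f x
              ![EuclideanSpace.single i 1, EuclideanSpace.single i 1, EuclideanSpace.single i 1]
            + 3 * ∑ k ∈ Finset.univ.erase i,
                iteratedFDeriv ℝ 3 f x
                  ![EuclideanSpace.single i 1, EuclideanSpace.single k 1,
                    EuclideanSpace.single k 1])))
      ∧ (fun h : ℝ => A h - fderiv ℝ f x (EuclideanSpace.single i 1))
          =O[nhdsWithin (0 : ℝ) (Set.Ioi 0)] fun h => h ^ 2 := by
  classical
  -- construct a globally C³ function agreeing with f near x
  obtain ⟨r, hr0, hball⟩ : ∃ r > 0, Metric.ball x r ⊆ U := Metric.isOpen_iff.mp hU x hxU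
  have hrin : (0:ℝ) < r/4 := by positivity
  have hrout : r/4 < r/2 := by linarith
  set φ : ContDiffBump x := ⟨r/4, r/2, hrin, hrout⟩ with hφdef
  set F : EuclideanSpace ℝ (Fin d) → ℝ := fun y => φ y * f y with hFdef
  have hsub : Metric.closedBall x (r/2) ⊆ U := by
    refine Set.Subset.trans ?_ hball
    intro y hy
    have : dist y x ≤ r/2 := hy
    have : dist y x < r := by linarith
    exact this
  have hFC : ContDiff ℝ 3 F := by
    rw [contDiff_iff_contDiffAt]
    intro y
    by_cases hy : y ∈ U
    · exact (φ.contDiff.contDiffAt).mul (hf.contDiffAt (hU.mem_nhds hy))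
    · have hy' : y ∉ tsupport (φ : EuclideanSpace ℝ (Fin d) → ℝ) := by
        intro hmem
        exact hy (hsub (φ.tsupport_eq ▸ hmem))
      have hzero : F =ᶠ[nhds y] (fun _ => (0:ℝ)) := by
        filter_upwards [notMem_tsupport_iff_eventuallyEq.mp hy'] with z hz
        rw [hFdef]
        simp [hz]
      exact contDiffAt_const.congr_of_eventuallyEq hzero
  have hFeq : F =ᶠ[nhds x] f := by
    filter_upwards [Metric.closedBall_mem_nhds x hrin] with y hy
    rw [hFdef]
    simp [φ.one_of_mem_closedBall hy]
  have hfd : fderiv ℝ F x = fderiv ℝ f x := hFeq.fderiv_eq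
  have hit3 : iteratedFDeriv ℝ 3 F x = iteratedFDeriv ℝ 3 f x := by
    rw [← iteratedFDerivWithin_univ, ← iteratedFDerivWithin_univ]
    exact Filter.EventuallyEq.iteratedFDerivWithin_eq
      (hFeq.filter_mono nhdsWithin_le_nhds) hFeq.self_of_nhds 3
  have hcore := SPSA.core F x hFC i
  rw [hfd, hit3] at hcore
  -- A agrees with the regularized expression near 0⁺
  have hAB : ∀ᶠ h in nhdsWithin (0:ℝ) (Set.Ioi 0), A h = (2 ^ d : ℝ)⁻¹ * ∑ s : Fin d → Bool,
      (F (x + h • signVec d s) - F (x - h • signVec d s)) / (2 * h * signVec d s i) := by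
    have hFf : ∀ᶠ y in nhds x, F y = f y := hFeq
    have hall : ∀ᶠ h in nhds (0:ℝ), ∀ s : Fin d → Bool,
        F (x + h • signVec d s) = f (x + h • signVec d s)
          ∧ F (x - h • signVec d s) = f (x - h • signVec d s) := by
      rw [Filter.eventually_all]
      intro s
      have hcont1 : Tendsto (fun h : ℝ => x + h • signVec d s) (nhds 0) (nhds x) := by
        have : Continuous (fun h : ℝ => x + h • signVec d s) :=
          continuous_const.add (continuous_id.smul continuous_const)
        have h0 := this.tendsto 0
        simpa using h0
      have hcont2 : Tendsto (fun h : ℝ => x - h • signVec d s) (nhds 0) (nhds x) := by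
        have : Continuous (fun h : ℝ => x - h • signVec d s) :=
          continuous_const.sub (continuous_id.smul continuous_const)
        have h0 := this.tendsto 0
        simpa using h0
      exact (hcont1.eventually hFf).and (hcont2.eventually hFf)
    filter_upwards [nhdsWithin_le_nhds hall] with h hh
    rw [hA h]
    congr 1
    refine Finset.sum_congr rfl fun s _ => ?_
    rw [(hh s).1, (hh s).2]
  have htendsto : Tendsto (fun h : ℝ => (A h - fderiv ℝ f x (EuclideanSpace.single i 1)) / h ^ 2)
      (nhdsWithin (0 : ℝ) (Set.Ioi 0))
      (nhds ((1 / 6) *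
          (iteratedFDeriv ℝ 3 f x
              ![EuclideanSpace.single i 1, EuclideanSpace.single i 1, EuclideanSpace.single i 1]
            + 3 * ∑ k ∈ Finset.univ.erase i,
                iteratedFDeriv ℝ 3 f x
                  ![EuclideanSpace.single i 1, EuclideanSpace.single k 1,
                    EuclideanSpace.single k 1]))) := by
    apply hcore.congr'
    filter_upwards [hAB] with h hh
    rw [hh]
  refine ⟨htendsto, ?_⟩
  -- big-O part
  have h1 : (fun h : ℝ => (A h - fderiv ℝ f x (EuclideanSpace.single i 1)) / h ^ 2)
      =O[nhdsWithin (0:ℝ) (Set.Ioi 0)] (fun _ => (1:ℝ)) := htendsto.isBigO_one ℝ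
  have h2 := h1.mul (isBigO_refl (fun h : ℝ => h ^ 2) (nhdsWithin (0:ℝ) (Set.Ioi 0)))
  refine h2.congr' ?_ ?_
  · filter_upwards [self_mem_nhdsWithin] with h hh
    have hne : h ≠ 0 := ne_of_gt hh
    field_simp
  · filter_upwards with h
    rw [one_mul]
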